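/- arXiv:2410.12315 — 2 statements merged into one kernel-verified Lean document; each statement's English description precedes it below -/
import Mathlib

section
/- Let H be a real Hilbert space, C ⊆ H a nonempty closed convex set, x ∈ C and y ∈ N_C(x). If C is polyhedric at x for y, then the indicator function ι_C is twice epi-differentiable at x for y, and its second-order epi-derivative is the indicator function of T_C(x) ∩ (ℝy)^⊥; that is, the family of second-order difference quotients (δ²_t ι_C(x|y))_{t>0} Mosco epi-converges as t → 0⁺ to ι_{T_C(x) ∩ (ℝy)^⊥}. -/
open Filter Topology
open scoped RealInnerProductSpace

open Classical in
/-- The indicator function of a set, with values in `EReal`: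
`0` on `C` and `+∞` outside `C`. -/
noncomputable def indE {H : Type*} (C : Set H) (v : H) : EReal :=
  if v ∈ C then 0 else ⊤

/-- The second-order difference quotient of `φ : H → EReal` at `x` for `y`
with parameter `t`: `z ↦ (φ(x + t z) − φ(x) − t⟪y, z⟫) / ((1/2)t²)`. -/
noncomputable def sodq {H : Type*} [NormedAddCommGroup H] [InnerProductSpace ℝ H]
    (φ : H → EReal) (x y : H) (t : ℝ) (z : H) : EReal :=
  (φ (x + t • z) - φ x - ((t * ⟪y, z⟫ : ℝ) : EReal)) / (((1 / 2 : ℝ) * t ^ 2 : ℝ) : EReal)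

/-- The epigraph of `φ : H → EReal`, as a subset of `H × ℝ`. -/
def epiE {H : Type*} (φ : H → EReal) : Set (H × ℝ) :=
  {p | φ p.1 ≤ (p.2 : EReal)}

/-- Weak convergence of a sequence in `H × ℝ`: weak convergence (tested by
inner products) of the first components and convergence of the second. -/
def WeakConvSeqP {H : Type*} [NormedAddCommGroup H] [InnerProductSpace ℝ H]
    (p : ℕ → H × ℝ) (l : H × ℝ) : Prop :=
  (∀ w : H, Tendsto (fun n => ⟪(p n).1, w⟫) atTop (nhds ⟪l.1, w⟫)) ∧
    Tendsto (fun n => (p n).2) atTop (nhds l.2)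

/-- Weak outer limit (w-limsup) of a family of subsets of `H × ℝ`, as `t → 0⁺`. -/
def wLimsupEpi {H : Type*} [NormedAddCommGroup H] [InnerProductSpace ℝ H]
    (A : ℝ → Set (H × ℝ)) : Set (H × ℝ) :=
  {q | ∃ t : ℕ → ℝ, (∀ n, 0 < t n) ∧ Tendsto t atTop (nhds 0) ∧
    ∃ p : ℕ → H × ℝ, WeakConvSeqP p q ∧ ∀ n, p n ∈ A (t n)}

/-- Strong inner limit (liminf) of a family of subsets of `H × ℝ`, as `t → 0⁺`. -/
def sLiminfEpi {H : Type*} [NormedAddCommGroup H] [InnerProductSpace ℝ H]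
    (A : ℝ → Set (H × ℝ)) : Set (H × ℝ) :=
  {q | ∀ t : ℕ → ℝ, (∀ n, 0 < t n) → Tendsto t atTop (nhds 0) →
    ∃ p : ℕ → H × ℝ, Tendsto p atTop (nhds q) ∧ ∃ N : ℕ, ∀ n ≥ N, p n ∈ A (t n)}

/-- Mosco epi-convergence of a family `(φ_t)_{t>0}` to `ψ` as `t → 0⁺`:
the epigraphs Mosco-converge, i.e. `w-limsup epi(φ_t) ⊆ epi(ψ) ⊆ liminf epi(φ_t)`. -/
def MoscoEpiConv {H : Type*} [NormedAddCommGroup H] [InnerProductSpace ℝ H]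
    (φ : ℝ → H → EReal) (ψ : H → EReal) : Prop :=
  wLimsupEpi (fun t => epiE (φ t)) ⊆ epiE ψ ∧
    epiE ψ ⊆ sLiminfEpi (fun t => epiE (φ t))

/-- The tangent cone to a convex set `C` at `x`:
the closure of `{z | ∃ λ > 0, x + λ z ∈ C}`. -/
def tangentConeSet {H : Type*} [NormedAddCommGroup H] [InnerProductSpace ℝ H]
    (C : Set H) (x : H) : Set H :=
  closure {z | ∃ l : ℝ, 0 < l ∧ x + l • z ∈ C}

section Aux
variable {H : Type*} [NormedAddCommGroup H] [InnerProductSpace ℝ H]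

/-- Scaling down stays in a convex set containing `x`. -/
lemma aux_scale {C : Set H} (hconv : Convex ℝ C) {x z : H} (hx : x ∈ C)
    {l s : ℝ} (hl : x + l • z ∈ C) (hs : 0 < s) (hsl : s ≤ l) : x + s • z ∈ C := by
  have hl0 : 0 < l := lt_of_lt_of_le hs hsl
  have key : x + s • z = (1 - s / l) • x + (s / l) • (x + l • z) := by
    rw [smul_add, smul_smul, div_mul_cancel₀ _ (ne_of_gt hl0)]
    module
  rw [key]
  exact hconv hx hl (sub_nonneg.mpr ((div_le_one hl0).mpr hsl)) (by positivity) (by ring)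

/-- The set of feasible directions is convex. -/
lemma aux_D_convex {C : Set H} (hconv : Convex ℝ C) {x : H} (hx : x ∈ C) :
    Convex ℝ {z | ∃ l : ℝ, 0 < l ∧ x + l • z ∈ C} := by
  rintro z1 ⟨l1, hl1, h1⟩ z2 ⟨l2, hl2, h2⟩ a b ha hb hab
  refine ⟨min l1 l2, lt_min hl1 hl2, ?_⟩
  have hm : 0 < min l1 l2 := lt_min hl1 hl2
  have h1' : x + min l1 l2 • z1 ∈ C := aux_scale hconv hx h1 hm (min_le_left _ _)
  have h2' : x + min l1 l2 • z2 ∈ C := aux_scale hconv hx h2 hm (min_le_right _ _)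
  have key : a • (x + min l1 l2 • z1) + b • (x + min l1 l2 • z2)
      = (a + b) • x + min l1 l2 • (a • z1 + b • z2) := by module
  have := hconv h1' h2' ha hb hab
  rw [key, hab, one_smul] at this
  exact this

/-- A closed convex set is weakly sequentially closed. -/
lemma aux_weak_closed [CompleteSpace H] {S : Set H} (hS : Convex ℝ S) (hScl : IsClosed S)
    {u : ℕ → H} (hu : ∀ n, u n ∈ S) {z : H}
    (hw : ∀ w : H, Tendsto (fun n => ⟪u n, w⟫) atTop (𝓝 ⟪z, w⟫)) : z ∈ S := by
  by_contra hz
  obtain ⟨f, c, hfz, hfb⟩ := geometric_hahn_banach_point_closed hS hScl hz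
  set w := (InnerProductSpace.toDual ℝ H).symm f with hwdef
  have hfw : ∀ v : H, ⟪v, w⟫ = f v := fun v => by
    rw [real_inner_comm]; exact InnerProductSpace.toDual_symm_apply
  have h1 : Tendsto (fun n => ⟪u n, w⟫) atTop (𝓝 ⟪z, w⟫) := hw w
  have h2 : ∀ n, c ≤ ⟪u n, w⟫ := fun n => by rw [hfw]; exact (hfb _ (hu n)).le
  have : c ≤ ⟪z, w⟫ := le_of_tendsto_of_tendsto tendsto_const_nhds h1
    (Eventually.of_forall h2)
  rw [hfw] at this
  exact absurd (lt_of_lt_of_le hfz this) (lt_irrefl _)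

open Classical in
/-- Value of the second-order difference quotient of the indicator. -/
lemma aux_sodq_eq {C : Set H} {x : H} (hx : x ∈ C) (y : H) {t : ℝ} (ht : 0 < t) (z : H) :
    sodq (indE C) x y t z
      = if x + t • z ∈ C then (((-2 * ⟪y, z⟫ / t : ℝ)) : EReal) else ⊤ := by
  simp only [sodq, indE]
  rw [if_pos hx]
  by_cases h : x + t • z ∈ C
  · rw [if_pos h, if_pos h]
    rw [show ((0:EReal)) = ((0:ℝ):EReal) from rfl, ← EReal.coe_sub, ← EReal.coe_sub,
      ← EReal.coe_div]
    congr 1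
    field_simp
    ring
  · rw [if_neg h, if_neg h]
    rw [show ((0:EReal)) = ((0:ℝ):EReal) from rfl, EReal.top_sub_coe, EReal.top_sub_coe,
      EReal.top_div_of_pos_ne_top (by exact_mod_cast by positivity) (EReal.coe_ne_top _)]

lemma aux_mem_epi_sodq {C : Set H} {x : H} (hx : x ∈ C) (y : H) {t : ℝ} (ht : 0 < t)
    (z : H) (β : ℝ) :
    (z, β) ∈ epiE (sodq (indE C) x y t) ↔ x + t • z ∈ C ∧ -2 * ⟪y, z⟫ / t ≤ β := by
  simp only [epiE, Set.mem_setOf_eq, aux_sodq_eq hx y ht]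
  by_cases h : x + t • z ∈ C
  · rw [if_pos h]
    simp only [h, true_and]
    exact_mod_cast Iff.rfl
  · rw [if_neg h]
    simp [h]

lemma aux_mem_epi_indE {K : Set H} (z : H) (β : ℝ) :
    (z, β) ∈ epiE (indE K) ↔ z ∈ K ∧ 0 ≤ β := by
  simp only [epiE, indE, Set.mem_setOf_eq]
  by_cases h : z ∈ K
  · rw [if_pos h]
    simp only [h, true_and]
    exact_mod_cast Iff.rfl
  · rw [if_neg h]
    simp [h]

end Aux

/-- If a nonempty closed convex set `C ⊆ H` is polyhedric at
`x ∈ C` for `y ∈ N_C(x)`, then the indicator function `ι_C` is twice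
epi-differentiable at `x` for `y`, with second-order epi-derivative the
indicator of `T_C(x) ∩ (ℝy)^⊥`: the family of second-order difference
quotients Mosco epi-converges to `ι_{T_C(x) ∩ (ℝy)^⊥}` as `t → 0⁺`. -/
theorem statement6
    {H : Type*} [NormedAddCommGroup H] [InnerProductSpace ℝ H] [CompleteSpace H]
    (C : Set H) (hne : C.Nonempty) (hcl : IsClosed C) (hconv : Convex ℝ C)
    (x : H) (hx : x ∈ C) (y : H) (hy : ∀ c ∈ C, ⟪y, c - x⟫ ≤ 0)
    (hpoly : tangentConeSet C x ∩ {z | ⟪z, y⟫ = 0}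
      = closure ({z | ∃ l : ℝ, 0 < l ∧ x + l • z ∈ C} ∩ {z | ⟪z, y⟫ = 0})) :
    MoscoEpiConv (fun t => sodq (indE C) x y t)
      (indE (tangentConeSet C x ∩ {z | ⟪z, y⟫ = 0})) := by
  constructor
  · -- w-limsup ⊆ epi ψ
    rintro ⟨z, β⟩ ⟨t, htpos, ht0, p, ⟨hw1, hw2⟩, hmem⟩
    have hmem' : ∀ n, x + t n • (p n).1 ∈ C ∧ -2 * ⟪y, (p n).1⟫ / t n ≤ (p n).2 :=
      fun n => (aux_mem_epi_sodq hx y (htpos n) (p n).1 (p n).2).mp (hmem n)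
    have hyz : ∀ n, ⟪y, (p n).1⟫ ≤ 0 := by
      intro n
      have h := hy _ (hmem' n).1
      rw [add_sub_cancel_left, inner_smul_right] at h
      nlinarith [htpos n]
    have hβn : ∀ n, 0 ≤ (p n).2 := fun n =>
      le_trans (div_nonneg (by linarith [hyz n]) (htpos n).le) (hmem' n).2
    have hβ : 0 ≤ β :=
      le_of_tendsto_of_tendsto tendsto_const_nhds hw2 (Eventually.of_forall hβn)
    have hbd : ∀ n, -⟪y, (p n).1⟫ ≤ (p n).2 * t n / 2 := by
      intro n
      have h2 := (hmem' n).2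
      rw [div_le_iff₀ (htpos n)] at h2
      linarith
    have hto : Tendsto (fun n => -⟪y, (p n).1⟫) atTop (𝓝 0) := by
      refine squeeze_zero (fun n => by linarith [hyz n]) hbd ?_
      have : Tendsto (fun n => (p n).2 * t n / 2) atTop (𝓝 (β * 0 / 2)) :=
        (hw2.mul ht0).div_const 2
      simpa using this
    have h2 : Tendsto (fun n => ⟪y, (p n).1⟫) atTop (𝓝 0) := by
      have := hto.neg
      simpa using this
    have h2' : Tendsto (fun n => ⟪(p n).1, y⟫) atTop (𝓝 0) := by
      have he : (fun n => ⟪(p n).1, y⟫) = fun n => ⟪y, (p n).1⟫ :=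
        funext fun n => real_inner_comm _ _
      rw [he]; exact h2
    have hzy : ⟪z, y⟫ = 0 := tendsto_nhds_unique (hw1 y) h2'
    have hzD : z ∈ tangentConeSet C x :=
      aux_weak_closed ((aux_D_convex hconv hx).closure) isClosed_closure
        (fun n => subset_closure ⟨t n, htpos n, (hmem' n).1⟩) hw1
    rw [aux_mem_epi_indE]
    exact ⟨⟨hzD, hzy⟩, hβ⟩
  · -- epi ψ ⊆ strong liminf
    rintro ⟨z, β⟩ hzβ
    rw [aux_mem_epi_indE] at hzβ
    obtain ⟨hzK, hβ⟩ := hzβ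
    have hzcl : z ∈ closure ({z : H | ∃ l : ℝ, 0 < l ∧ x + l • z ∈ C} ∩ {z | ⟪z, y⟫ = 0}) := by
      rw [← hpoly]; exact hzK
    intro t htpos ht0
    obtain ⟨w, hwmem, hwz⟩ := mem_closure_iff_seq_limit.mp hzcl
    choose l hl1 hl2 using fun k => (hwmem k).1
    classical
    set m : ℕ → ℝ := fun k => (Finset.range (k + 1)).inf' Finset.nonempty_range_add_one l with hm
    have hmpos : ∀ k, 0 < m k := fun k =>
      (Finset.lt_inf'_iff _).mpr fun i _ => hl1 i
    have hml : ∀ k, m k ≤ l k := fun k => Finset.inf'_le _ (Finset.self_mem_range_succ k)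
    set kk : ℕ → ℕ := fun n => Nat.findGreatest (fun k => t n ≤ m k) n with hkk
    have hkktop : Tendsto kk atTop atTop := by
      rw [tendsto_atTop_atTop]
      intro K
      obtain ⟨N, hN⟩ := eventually_atTop.mp (ht0.eventually_lt_const (hmpos K))
      exact ⟨max N K, fun n hn =>
        Nat.le_findGreatest (le_trans (le_max_right _ _) hn)
          (hN n (le_trans (le_max_left _ _) hn)).le⟩
    refine ⟨fun n => (w (kk n), β), ?_, ?_⟩
    · exact (hwz.comp hkktop).prodMk_nhds tendsto_const_nhds
    · obtain ⟨N, hN⟩ := eventually_atTop.mp (ht0.eventually_lt_const (hmpos 0))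
      refine ⟨N, fun n hn => ?_⟩
      have hP : t n ≤ m (kk n) :=
        Nat.findGreatest_spec (P := fun k => t n ≤ m k) (Nat.zero_le n) (hN n hn).le
      rw [aux_mem_epi_sodq hx y (htpos n)]
      refine ⟨aux_scale hconv hx (hl2 (kk n)) (htpos n) (le_trans hP (hml (kk n))), ?_⟩
      have hinner : ⟪y, w (kk n)⟫ = 0 := by
        rw [real_inner_comm]; exact (hwmem (kk n)).2
      rw [hinner]
      simpa using hβ
end

section
/- Let H be a real Hilbert space, C ⊆ H a nonempty closed convex set, B : H → H a bounded linear operator, and E : [0,∞) → H right-differentiable at t = 0 with derivative E'(0). Define u(t) := proj_C(E(t)), u₀ := u(0), y := E(0) − u₀ ∈ N_C(u₀), and v(t) := u(t) + t B(u(t)) for t ≥ 0. Assume C is polyhedric at u₀ for y, and set S := T_C(u₀) ∩ (ℝy)^⊥. Then the map t ↦ v(t) is right-differentiable at t = 0, its derivative is v'(0) = proj_S(E'(0)) + B(u₀), it belongs to the translated cone S + B(u₀), and it is the unique element w of S + B(u₀) satisfying the variational inequality ⟨E'(0) + B(u₀) − w, φ − w⟩ ≤ 0 for all φ ∈ S +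 B(u₀). -/
open Filter Topology
open scoped RealInnerProductSpace

/-- `C` is polyhedric at `x ∈ C` for `y ∈ N_C(x)` if
`T_C(x) ∩ (ℝy)^⊥ = closure ({z | ∃ λ > 0, x + λ z ∈ C} ∩ (ℝy)^⊥)`. -/
def Polyhedric {H : Type*} [NormedAddCommGroup H] [InnerProductSpace ℝ H]
    (C : Set H) (x y : H) : Prop :=
  tangentConeSet C x ∩ {z | ⟪z, y⟫ = 0}
    = closure ({z | ∃ l : ℝ, 0 < l ∧ x + l • z ∈ C} ∩ {z | ⟪z, y⟫ = 0})

/-- `IsProj C x u` means `u` is the metric projection of `x` onto `C`: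
`u ∈ C` and `u` is at minimal distance from `x` among points of `C`. -/
def IsProj {H : Type*} [NormedAddCommGroup H] [InnerProductSpace ℝ H]
    (C : Set H) (x u : H) : Prop :=
  u ∈ C ∧ ∀ w ∈ C, ‖x - u‖ ≤ ‖x - w‖

section MignotHelpers

variable {H : Type*} [NormedAddCommGroup H] [InnerProductSpace ℝ H]

lemma self_eq_zero_of_nonpos {x : H} (h : ⟪x, x⟫ ≤ 0) : x = 0 :=
  (inner_self_eq_zero (𝕜 := ℝ)).mp (le_antisymm h real_inner_self_nonneg)

lemma vi_of_proj {s : Set H} (hconv : Convex ℝ s) {x p : H}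
    (h : p ∈ s ∧ ∀ w ∈ s, ‖x - p‖ ≤ ‖x - w‖) : ∀ w ∈ s, ⟪x - p, w - p⟫ ≤ 0 := by
  have : Nonempty s := ⟨⟨p, h.1⟩⟩
  refine (norm_eq_iInf_iff_real_inner_le_zero hconv h.1).mp ?_
  refine le_antisymm (le_ciInf fun w => h.2 w w.2) ?_
  exact ciInf_le ⟨0, by rintro r ⟨w, rfl⟩; exact norm_nonneg _⟩ (⟨p, h.1⟩ : s)

lemma proj_of_vi {s : Set H} {x p : H}
    (hp : p ∈ s) (h : ∀ w ∈ s, ⟪x - p, w - p⟫ ≤ 0) : p ∈ s ∧ ∀ w ∈ s, ‖x - p‖ ≤ ‖x - w‖ := by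
  refine ⟨hp, fun w hw => ?_⟩
  have h1 := h w hw
  have h2 : ‖x - w‖ ^ 2 = ‖x - p‖ ^ 2 - 2 * ⟪x - p, w - p⟫ + ‖w - p‖ ^ 2 := by
    have hh := norm_sub_sq_real (x - p) (w - p)
    calc ‖x - w‖ ^ 2 = ‖(x - p) - (w - p)‖ ^ 2 := by rw [sub_sub_sub_cancel_right]
    _ = _ := hh
  nlinarith [norm_nonneg (x - w), norm_nonneg (x - p), sq_nonneg (‖w - p‖)]

lemma exists_proj_vi [CompleteSpace H] (s : Set H) (hne : s.Nonempty) (hcl : IsClosed s)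
    (hconv : Convex ℝ s) (x : H) : ∃ p ∈ s, ∀ w ∈ s, ⟪x - p, w - p⟫ ≤ 0 := by
  obtain ⟨p, hp, hmin⟩ := exists_norm_eq_iInf_of_complete_convex hne hcl.isComplete hconv x
  exact ⟨p, hp, (norm_eq_iInf_iff_real_inner_le_zero hconv hp).mp hmin⟩

lemma segment_mem {C : Set H} (hconv : Convex ℝ C) {x z : H} {l m : ℝ}
    (hx : x ∈ C) (hm : 0 ≤ m) (hml : m ≤ l) (h : x + l • z ∈ C) : x + m • z ∈ C := by
  rcases le_or_gt l 0 with hl | hl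
  · have hm0 : m = 0 := le_antisymm (hml.trans hl) hm
    simpa [hm0] using hx
  · have h1 : 0 ≤ m / l := div_nonneg hm hl.le
    have h2 : 0 ≤ 1 - m / l := by
      rw [sub_nonneg]; exact (div_le_one hl).mpr hml
    have h3 := hconv h hx h1 h2 (by ring)
    have h4 : (m / l) • (x + l • z) + (1 - m / l) • x = x + ((m / l) * l) • z := by module
    rw [h4, div_mul_cancel₀ _ hl.ne'] at h3
    exact h3

lemma feas_convex {C : Set H} (hconv : Convex ℝ C) {x : H} (hx : x ∈ C) :
    Convex ℝ {z : H | ∃ l : ℝ, 0 < l ∧ x + l • z ∈ C} := by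
  rintro z ⟨l, hl, hzl⟩ z' ⟨m, hm, hzm⟩ a b ha hb hab
  refine ⟨min l m, lt_min hl hm, ?_⟩
  have h1 : x + min l m • z ∈ C := segment_mem hconv hx (lt_min hl hm).le (min_le_left _ _) hzl
  have h2 : x + min l m • z' ∈ C := segment_mem hconv hx (lt_min hl hm).le (min_le_right _ _) hzm
  have h3 := hconv h1 h2 ha hb hab
  have h4 : a • (x + min l m • z) + b • (x + min l m • z') =
      (a + b) • x + min l m • (a • z + b • z') := by module
  rw [h4, hab, one_smul] at h3
  exact h3

lemma feas_smul {C : Set H} {x : H} {c : ℝ} (hc : 0 < c) {z : H}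
    (hz : z ∈ {z : H | ∃ l : ℝ, 0 < l ∧ x + l • z ∈ C}) :
    c • z ∈ {z : H | ∃ l : ℝ, 0 < l ∧ x + l • z ∈ C} := by
  obtain ⟨l, hl, h⟩ := hz
  exact ⟨l / c, div_pos hl hc, by rwa [smul_smul, div_mul_cancel₀ _ hc.ne']⟩

lemma closure_smul_mem {s : Set H} {c : ℝ} (hc : 0 < c)
    (hs : ∀ z ∈ s, c • z ∈ s) {z : H} (hz : z ∈ closure s) : c • z ∈ closure s := by
  have hcont : Continuous fun w : H => c • w := continuous_const_smul c
  have h2 := image_closure_subset_closure_image hcont (s := s) ⟨z, hz, rfl⟩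
  exact closure_mono (by rintro _ ⟨w, hw, rfl⟩; exact hs w hw) h2


end MignotHelpers

set_option maxHeartbeats 3200000 in
/-- Let `C ⊆ H` be nonempty closed convex, `B : H → H` a bounded
linear operator, `E : [0,∞) → H` right-differentiable at `t = 0` with
derivative `E'(0)`, `u(t) := proj_C(E(t))`, `u₀ := u(0)`, `y := E(0) − u₀`,
and `v(t) := u(t) + t B(u(t))`. If `C` is polyhedric at `u₀` for `y`, and
`S := T_C(u₀) ∩ (ℝy)^⊥`, then `v` is right-differentiable at `t = 0`, its
derivative is `v'(0) = proj_S(E'(0)) + B(u₀)`, it belongs to the translated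
cone `S + B(u₀)`, and it is the unique element `w` of `S + B(u₀)` satisfying
`⟪E'(0) + B(u₀) − w, φ − w⟫ ≤ 0` for all `φ ∈ S + B(u₀)`. -/
theorem statement9
    {H : Type*} [NormedAddCommGroup H] [InnerProductSpace ℝ H] [CompleteSpace H]
    (C : Set H) (hne : C.Nonempty) (hcl : IsClosed C) (hconv : Convex ℝ C)
    (B : H →L[ℝ] H)
    (E : ℝ → H) (E' : H)
    (hE' : Tendsto (fun t : ℝ => (1 / t) • (E t - E 0))
      (nhdsWithin 0 (Set.Ioi 0)) (nhds E'))
    (u : ℝ → H)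
    (hu : ∀ t : ℝ, 0 ≤ t → IsProj C (E t) (u t))
    (hpoly : Polyhedric C (u 0) (E 0 - u 0)) :
    ∃ v' : H,
      Tendsto (fun t : ℝ => (1 / t) • ((u t + t • B (u t)) - u 0))
        (nhdsWithin 0 (Set.Ioi 0)) (nhds v')
      ∧ (∃ p : H,
          IsProj (tangentConeSet C (u 0) ∩ {z | ⟪z, E 0 - u 0⟫ = 0}) E' p
          ∧ v' = p + B (u 0))
      ∧ v' ∈ (fun s => s + B (u 0)) ''
          (tangentConeSet C (u 0) ∩ {z | ⟪z, E 0 - u 0⟫ = 0})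
      ∧ (∀ φ ∈ (fun s => s + B (u 0)) ''
            (tangentConeSet C (u 0) ∩ {z | ⟪z, E 0 - u 0⟫ = 0}),
          ⟪E' + B (u 0) - v', φ - v'⟫ ≤ 0)
      ∧ (∀ w ∈ (fun s => s + B (u 0)) ''
            (tangentConeSet C (u 0) ∩ {z | ⟪z, E 0 - u 0⟫ = 0}),
          (∀ φ ∈ (fun s => s + B (u 0)) ''
              (tangentConeSet C (u 0) ∩ {z | ⟪z, E 0 - u 0⟫ = 0}),
            ⟪E' + B (u 0) - w, φ - w⟫ ≤ 0) → w = v') := by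
  have hu0C : u 0 ∈ C := (hu 0 le_rfl).1
  have viC : ∀ t : ℝ, 0 ≤ t → ∀ c ∈ C, ⟪E t - u t, c - u t⟫ ≤ 0 :=
    fun t ht => vi_of_proj hconv (hu t ht)
  set y : H := E 0 - u 0 with hydef
  set Kf : Set H := {z : H | ∃ l : ℝ, 0 < l ∧ u 0 + l • z ∈ C} with hKfdef
  have hTKf : tangentConeSet C (u 0) = closure Kf := rfl
  set S : Set H := tangentConeSet C (u 0) ∩ {z | ⟪z, y⟫ = 0} with hSdef
  have hKf0 : (0 : H) ∈ Kf := ⟨1, one_pos, by simpa using hu0C⟩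
  have hKfconv : Convex ℝ Kf := feas_convex hconv hu0C
  have hTcl : IsClosed (tangentConeSet C (u 0)) := isClosed_closure
  have hTconv : Convex ℝ (tangentConeSet C (u 0)) := hKfconv.closure
  have hTsmul : ∀ c : ℝ, 0 < c → ∀ z ∈ tangentConeSet C (u 0),
      c • z ∈ tangentConeSet C (u 0) :=
    fun c hc z hz => closure_smul_mem hc (fun w hw => feas_smul hc hw) hz
  have hperp_cl : IsClosed {z : H | ⟪z, y⟫ = 0} :=
    isClosed_eq (continuous_id.inner continuous_const) continuous_const
  have hperp_conv : Convex ℝ {z : H | ⟪z, y⟫ = 0} := by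
    intro a ha b hb s t hs ht hst
    simp only [Set.mem_setOf_eq] at *
    rw [inner_add_left, real_inner_smul_left, real_inner_smul_left, ha, hb]
    ring
  have hScl : IsClosed S := hTcl.inter hperp_cl
  have hSconv : Convex ℝ S := hTconv.inter hperp_conv
  have hS0 : (0 : H) ∈ S := ⟨subset_closure hKf0, by simp⟩
  have hSsmul : ∀ c : ℝ, 0 < c → ∀ z ∈ S, c • z ∈ S := by
    rintro c hc z ⟨hz1, hz2⟩
    refine ⟨hTsmul c hc z hz1, ?_⟩
    simp only [Set.mem_setOf_eq] at hz2 ⊢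
    rw [real_inner_smul_left, hz2]
    ring
  obtain ⟨p, hpS, hpVI⟩ := exists_proj_vi S ⟨0, hS0⟩ hScl hSconv E'
  have hp0 : ⟪E' - p, p⟫ = 0 := by
    have h1 := hpVI ((2 : ℝ) • p) (hSsmul 2 two_pos p hpS)
    have h2 := hpVI (((1 : ℝ) / 2) • p) (hSsmul (1 / 2) one_half_pos p hpS)
    have e1 : (2 : ℝ) • p - p = p := by module
    have e2 : ((1 : ℝ) / 2) • p - p = -(((1 : ℝ) / 2) • p) := by module
    rw [e1] at h1
    rw [e2, inner_neg_right, real_inner_smul_right] at h2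
    linarith
  -- the normal cone and its sum with the line ℝy
  set N : Set H := {n : H | ∀ c ∈ C, ⟪n, c - u 0⟫ ≤ 0} with hNdef
  have hN0 : (0 : H) ∈ N := fun c _ => by simp
  have hNpolar : ∀ g : H, (∀ n ∈ N, ⟪n, g⟫ ≤ 0) → g ∈ tangentConeSet C (u 0) := by
    intro g hg
    by_contra hgT
    obtain ⟨s, hsT, hsVI⟩ := exists_proj_vi (tangentConeSet C (u 0))
      ⟨0, subset_closure hKf0⟩ hTcl hTconv g
    have hgs0 : ⟪g - s, s⟫ = 0 := by
      have h1 := hsVI ((2 : ℝ) • s) (hTsmul 2 two_pos s hsT)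
      have h2 := hsVI (((1 : ℝ) / 2) • s) (hTsmul (1 / 2) one_half_pos s hsT)
      have e1 : (2 : ℝ) • s - s = s := by module
      have e2 : ((1 : ℝ) / 2) • s - s = -(((1 : ℝ) / 2) • s) := by module
      rw [e1] at h1
      rw [e2, inner_neg_right, real_inner_smul_right] at h2
      linarith
    have hgz : ∀ z ∈ tangentConeSet C (u 0), ⟪g - s, z⟫ ≤ 0 := by
      intro z hz
      have := hsVI z hz
      rw [inner_sub_right] at this
      linarith
    have hgN : (g - s) ∈ N := by
      intro c hc
      exact hgz _ (subset_closure ⟨1, one_pos, by simpa using hc⟩)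
    have h5 := hg _ hgN
    have hne' : g - s ≠ 0 := by
      intro h
      rw [sub_eq_zero] at h
      exact hgT (h ▸ hsT)
    have h6 : ⟪g - s, g - s⟫ ≤ 0 := by
      rw [inner_sub_right]
      linarith [hgs0, h5]
    exact hne' (self_eq_zero_of_nonpos h6)
  set KN : Set H := {q : H | ∃ n ∈ N, ∃ β : ℝ, q = n + β • y} with hKNdef
  have hKN0 : (0 : H) ∈ KN := ⟨0, hN0, 0, by simp⟩
  have hKNconv : Convex ℝ KN := by
    rintro q1 ⟨n1, hn1, β1, rfl⟩ q2 ⟨n2, hn2, β2, rfl⟩ a b ha hb hab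
    refine ⟨a • n1 + b • n2, ?_, a * β1 + b * β2, by module⟩
    intro c hc
    rw [inner_add_left, real_inner_smul_left, real_inner_smul_left]
    nlinarith [hn1 c hc, hn2 c hc]
  have hKNsmul : ∀ c : ℝ, 0 < c → ∀ q ∈ KN, c • q ∈ KN := by
    rintro c hc q ⟨n, hn, β, rfl⟩
    refine ⟨c • n, ?_, c * β, by module⟩
    intro c' hc'
    rw [real_inner_smul_left]
    nlinarith [hn c' hc']
  have hyKN : y ∈ KN := ⟨0, hN0, 1, by simp⟩
  have hyKN' : -y ∈ KN := ⟨0, hN0, -1, by module⟩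
  have hq : E' - p ∈ closure KN := by
    by_contra hq'
    obtain ⟨r, hr, hrVI⟩ := exists_proj_vi (closure KN) ⟨0, subset_closure hKN0⟩
      isClosed_closure hKNconv.closure (E' - p)
    set g : H := (E' - p) - r with hgdef
    have hgr : ⟪g, r⟫ = 0 := by
      have hsm : ∀ c : ℝ, 0 < c → ∀ z ∈ closure KN, c • z ∈ closure KN :=
        fun c hc z hz => closure_smul_mem hc (hKNsmul c hc) hz
      have h1 := hrVI ((2 : ℝ) • r) (hsm 2 two_pos r hr)
      have h2 := hrVI (((1 : ℝ) / 2) • r) (hsm (1 / 2) one_half_pos r hr)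
      have e1 : (2 : ℝ) • r - r = r := by module
      have e2 : ((1 : ℝ) / 2) • r - r = -(((1 : ℝ) / 2) • r) := by module
      rw [e1] at h1
      rw [e2, inner_neg_right, real_inner_smul_right] at h2
      linarith
    have hgKN : ∀ q ∈ KN, ⟪g, q⟫ ≤ 0 := by
      intro q hq2
      have := hrVI q (subset_closure hq2)
      rw [inner_sub_right] at this
      linarith [hgr]
    have hgT : g ∈ tangentConeSet C (u 0) := by
      refine hNpolar g fun n hn => ?_
      rw [real_inner_comm]
      exact hgKN n ⟨n, hn, 0, by simp⟩
    have hgy : ⟪g, y⟫ = 0 := by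
      have h1 := hgKN y hyKN
      have h2 := hgKN (-y) hyKN'
      rw [inner_neg_right] at h2
      linarith
    have hgS : g ∈ S := ⟨hgT, hgy⟩
    have h1 := hpVI g hgS
    rw [inner_sub_right] at h1
    have hne' : g ≠ 0 := by
      intro h
      apply hq'
      have : E' - p = r := by rw [← sub_eq_zero]; exact h
      exact this ▸ hr
    have h2 : ⟪E' - p, g⟫ = ⟪g, g⟫ + ⟪r, g⟫ := by
      have e : E' - p = g + r := by rw [hgdef]; abel
      rw [e, inner_add_left]
    have h3 : ⟪r, g⟫ = 0 := by rw [real_inner_comm]; exact hgr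
    rw [h2, h3, hp0] at h1
    exact hne' (self_eq_zero_of_nonpos (by linarith))
  -- the main limit: (u t - u 0)/t → p
  set M : ℝ := ‖E'‖ + ‖p‖ + 1 with hMdef
  have hM1 : 0 < M := by positivity
  have hpM : ‖p‖ ≤ M := by
    have := norm_nonneg E'
    rw [hMdef]; linarith
  have hE'M : ‖E'‖ + 1 ≤ M := by
    have := norm_nonneg p
    rw [hMdef]; linarith
  have hw : Tendsto (fun t : ℝ => (1 / t) • (u t - u 0)) (𝓝[>] (0 : ℝ)) (𝓝 p) := by
    rw [Metric.tendsto_nhds]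
    intro ε hε
    set ε' : ℝ := ε ^ 2 / (2 * (5 * M + 1)) with hε'def
    have hε'pos : 0 < ε' := by positivity
    set ε₁ : ℝ := min ε' 1 with hε₁def
    have hε₁ : 0 < ε₁ := lt_min hε'pos one_pos
    have hε₁1 : ε₁ ≤ 1 := min_le_right _ _
    have hε₁ε' : ε₁ ≤ ε' := min_le_left _ _
    -- choose φ approximating p in the feasible cone ∩ y^⊥
    have hpcl : p ∈ closure (Kf ∩ {z : H | ⟪z, y⟫ = 0}) := by
      have hpoly' := hpoly
      unfold Polyhedric at hpoly'
      rw [← hpoly']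
      exact hpS
    obtain ⟨φ, hφmem, hφd⟩ := Metric.mem_closure_iff.mp hpcl ε₁ hε₁
    obtain ⟨⟨lφ, hlφ, hφC⟩, hφy⟩ := hφmem
    -- choose n + β y approximating E' - p
    obtain ⟨q', hq'mem, hq'd⟩ := Metric.mem_closure_iff.mp hq ε₁ hε₁
    obtain ⟨n, hn, β, rfl⟩ := hq'mem
    set cβ : ℝ := ε₁ / ((M ^ 2 + 1) * (1 + |β|)) with hcβdef
    have hcβpos : 0 < cβ := by positivity
    have ev1 : ∀ᶠ t in 𝓝[>] (0 : ℝ), t ∈ Set.Ioi (0 : ℝ) := self_mem_nhdsWithin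
    have ev2 : ∀ᶠ t in 𝓝[>] (0 : ℝ), ‖(1 / t) • (E t - E 0) - E'‖ < ε₁ := by
      have := Metric.tendsto_nhds.mp hE' ε₁ hε₁
      simpa [dist_eq_norm] using this
    have ev3 : ∀ᶠ t in 𝓝[>] (0 : ℝ), t < lφ :=
      eventually_nhdsWithin_of_eventually_nhds (gt_mem_nhds hlφ)
    have ev4 : ∀ᶠ t in 𝓝[>] (0 : ℝ), t < cβ :=
      eventually_nhdsWithin_of_eventually_nhds (gt_mem_nhds hcβpos)
    filter_upwards [ev1, ev2, ev3, ev4] with t ht' hZE htφ htβ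
    have ht : 0 < t := ht'
    have htne : t ≠ 0 := ht.ne'
    set Z : H := (1 / t) • (E t - E 0) with hZdef
    set W : H := (1 / t) • (u t - u 0) with hWdef
    rw [dist_eq_norm]
    have hbW : u t - u 0 = t • W := by
      rw [hWdef, smul_smul, mul_one_div, div_self htne, one_smul]
    have haZ : E t - E 0 = t • Z := by
      rw [hZdef, smul_smul, mul_one_div, div_self htne, one_smul]
    have hut : u t = u 0 + t • W := by rw [← hbW]; abel
    have hEt : E t = E 0 + t • Z := by rw [← haZ]; abel
    have hZM : ‖Z‖ ≤ M := by
      have h1 := norm_sub_norm_le Z E'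
      linarith [hE'M, hZE, hε₁1]
    have hA : ∀ φ' : H, u 0 + t • φ' ∈ C →
        t * ⟪y, φ' - W⟫ + t ^ 2 * ⟪Z - W, φ' - W⟫ ≤ 0 := by
      intro φ' hc
      have h0 := viC t ht.le _ hc
      have e1 : E t - u t = y + t • (Z - W) := by rw [hEt, hut, hydef]; module
      have e2 : (u 0 + t • φ') - u t = t • (φ' - W) := by rw [hut]; module
      rw [e1, e2, inner_add_left, real_inner_smul_right, real_inner_smul_left,
        real_inner_smul_right] at h0
      nlinarith [h0]
    have hyW : ⟪y, W⟫ ≤ 0 := by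
      have h0 := viC 0 le_rfl (u t) (hu t ht.le).1
      rw [hbW, real_inner_smul_right] at h0
      nlinarith [h0]
    have hK1 : ∀ φ' : H, ⟪φ', y⟫ = 0 → u 0 + t • φ' ∈ C → ⟪Z - W, φ' - W⟫ ≤ 0 := by
      intro φ' hperp hc
      have h0 := hA φ' hc
      have h1 : ⟪y, φ' - W⟫ = -⟪y, W⟫ := by
        have hyp : ⟪y, φ'⟫ = 0 := by rw [real_inner_comm]; exact hperp
        rw [inner_sub_right, hyp]
        ring
      rw [h1] at h0
      nlinarith [hyW, mul_pos ht ht]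
    have hWM : ‖W‖ ≤ M := by
      have h0 := hK1 0 (by simp) (by simpa using hu0C)
      rw [zero_sub, inner_neg_right, inner_sub_left] at h0
      have h1 : ⟪W, W⟫ ≤ ⟪Z, W⟫ := by linarith
      have h2 : ⟪Z, W⟫ ≤ ‖Z‖ * ‖W‖ := real_inner_le_norm Z W
      have h3 : ⟪W, W⟫ = ‖W‖ ^ 2 := real_inner_self_eq_norm_sq W
      nlinarith [norm_nonneg W, hM1, mul_le_mul_of_nonneg_right hZM (norm_nonneg W)]
    have hyW2 : -(t * M ^ 2) ≤ ⟪y, W⟫ := by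
      have h0 := hA 0 (by simpa using hu0C)
      rw [zero_sub, inner_neg_right, inner_neg_right] at h0
      have h2 : ⟪Z, W⟫ ≤ M * M :=
        le_trans (real_inner_le_norm Z W) (mul_le_mul hZM hWM (norm_nonneg W) hM1.le)
      have h3 : (0:ℝ) ≤ ⟪W, W⟫ := real_inner_self_nonneg
      have h2' : ⟪Z - W, W⟫ ≤ M * M := by
        rw [inner_sub_left]
        linarith
      have hZWt : t ^ 2 * ⟪Z - W, W⟫ ≤ t ^ 2 * (M * M) :=
        mul_le_mul_of_nonneg_left h2' (sq_nonneg t)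
      have hstep : t * (-(t * M ^ 2)) ≤ t * ⟪y, W⟫ := by nlinarith [h0, hZWt]
      exact (mul_le_mul_iff_right₀ ht).mp hstep
    have hnW : ⟪n, W⟫ ≤ 0 := by
      have h0 := hn (u t) (hu t ht.le).1
      rw [hbW, real_inner_smul_right] at h0
      nlinarith [h0]
    have hd1 : ‖p - φ‖ < ε₁ := by rw [← dist_eq_norm]; exact hφd
    have hq1 : ‖(E' - p) - (n + β • y)‖ < ε₁ := by rw [← dist_eq_norm]; exact hq'd
    have hT1 : ⟪Z - W, p - W⟫ ≤ 2 * M * ε₁ := by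
      have e : p - W = (φ - W) + (p - φ) := by abel
      rw [e, inner_add_right]
      have h1 := hK1 φ hφy (segment_mem hconv hu0C ht.le htφ.le hφC)
      have h2 : ⟪Z - W, p - φ⟫ ≤ ‖Z - W‖ * ‖p - φ‖ := real_inner_le_norm _ _
      have h3 : ‖Z - W‖ ≤ 2 * M := by
        have := norm_sub_le Z W
        linarith
      have h4 : ‖Z - W‖ * ‖p - φ‖ ≤ 2 * M * ε₁ :=
        mul_le_mul h3 hd1.le (norm_nonneg _) (by positivity)
      linarith
    have hT2 : ⟪Z - E', W - p⟫ ≤ ε₁ * (2 * M) := by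
      have h2 := real_inner_le_norm (Z - E') (W - p)
      have h3 : ‖W - p‖ ≤ 2 * M := by
        have := norm_sub_le W p
        linarith
      have h4 : ‖Z - E'‖ * ‖W - p‖ ≤ ε₁ * (2 * M) :=
        mul_le_mul hZE.le h3 (norm_nonneg _) hε₁.le
      linarith
    have hT3 : ⟪E' - p, W - p⟫ ≤ ε₁ * M + ε₁ := by
      rw [inner_sub_right]
      have e : E' - p = ((E' - p) - (n + β • y)) + n + β • y := by abel
      have h1 : ⟪E' - p, W⟫ = ⟪(E' - p) - (n + β • y), W⟫ + ⟪n, W⟫ + β * ⟪y, W⟫ := by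
        nth_rewrite 1 [e]
        rw [inner_add_left, inner_add_left, real_inner_smul_left]
      have h2 : ⟪(E' - p) - (n + β • y), W⟫ ≤ ε₁ * M :=
        le_trans (real_inner_le_norm _ _)
          (mul_le_mul hq1.le hWM (norm_nonneg _) hε₁.le)
      have h3 : β * ⟪y, W⟫ ≤ ε₁ := by
        have habs : |⟪y, W⟫| ≤ t * M ^ 2 := by
          rw [abs_le]
          constructor
          · exact hyW2
          · exact le_trans hyW (by positivity)
        have h4 : β * ⟪y, W⟫ ≤ |β| * |⟪y, W⟫| := by
          calc β * ⟪y, W⟫ ≤ |β * ⟪y, W⟫| := le_abs_self _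
          _ = |β| * |⟪y, W⟫| := abs_mul _ _
        have h5 : |β| * |⟪y, W⟫| ≤ |β| * (t * M ^ 2) :=
          mul_le_mul_of_nonneg_left habs (abs_nonneg β)
        have h7 : t * ((M ^ 2 + 1) * (1 + |β|)) < ε₁ := by
          rw [hcβdef] at htβ
          exact (lt_div_iff₀ (by positivity)).mp htβ
        nlinarith [abs_nonneg β, ht.le, sq_nonneg M]
      linarith [hp0]
    have hsplit : ⟪W - p, W - p⟫ = ⟪W - Z, W - p⟫ + ⟪Z - E', W - p⟫ + ⟪E' - p, W - p⟫ := by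
      rw [← inner_add_left, ← inner_add_left]
      congr 1
      abel
    have hT1' : ⟪W - Z, W - p⟫ ≤ 2 * M * ε₁ := by
      have e : ⟪W - Z, W - p⟫ = ⟪Z - W, p - W⟫ := by
        rw [show W - Z = -(Z - W) by abel, show W - p = -(p - W) by abel, inner_neg_neg]
      rw [e]
      exact hT1
    have hfin : ‖W - p‖ ^ 2 ≤ ε₁ * (5 * M + 1) := by
      rw [← real_inner_self_eq_norm_sq, hsplit]
      linarith
    have hlt : ‖W - p‖ ^ 2 < ε ^ 2 := by
      have h8 : ε₁ * (5 * M + 1) ≤ ε' * (5 * M + 1) :=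
        mul_le_mul_of_nonneg_right hε₁ε' (by positivity)
      have h9 : ε' * (5 * M + 1) = ε ^ 2 / 2 := by
        rw [hε'def]
        have h5ne : (5 * M + 1) ≠ 0 := by positivity
        field_simp
      nlinarith [hε]
    nlinarith [norm_nonneg (W - p), hε]
  -- continuity of u at 0⁺ and the derivative of v
  have huc : Tendsto u (𝓝[>] (0 : ℝ)) (𝓝 (u 0)) := by
    have hid : Tendsto (fun t : ℝ => t) (𝓝[>] (0 : ℝ)) (𝓝 0) :=
      tendsto_id.mono_right nhdsWithin_le_nhds
    have h1 : Tendsto (fun t : ℝ => t • ((1 / t) • (u t - u 0))) (𝓝[>] (0 : ℝ))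
        (𝓝 ((0 : ℝ) • p)) := hid.smul hw
    rw [zero_smul] at h1
    have h2 : (fun t : ℝ => t • ((1 / t) • (u t - u 0))) =ᶠ[𝓝[>] (0 : ℝ)]
        fun t => u t - u 0 := by
      filter_upwards [self_mem_nhdsWithin] with t ht
      have htne : t ≠ 0 := (Set.mem_Ioi.mp ht).ne'
      rw [smul_smul, mul_one_div, div_self htne, one_smul]
    have h3 : Tendsto (fun t : ℝ => u t - u 0) (𝓝[>] (0 : ℝ)) (𝓝 0) := Tendsto.congr' h2 h1
    have h4 := h3.add_const (u 0)
    simpa using h4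
  have hv : Tendsto (fun t : ℝ => (1 / t) • ((u t + t • B (u t)) - u 0)) (𝓝[>] (0 : ℝ))
      (𝓝 (p + B (u 0))) := by
    have hBu : Tendsto (fun t : ℝ => B (u t)) (𝓝[>] (0 : ℝ)) (𝓝 (B (u 0))) :=
      (B.continuous.tendsto (u 0)).comp huc
    have h1 := hw.add hBu
    refine Tendsto.congr' ?_ h1
    filter_upwards [self_mem_nhdsWithin] with t ht
    have htne : t ≠ 0 := (Set.mem_Ioi.mp ht).ne'
    have e : (u t + t • B (u t)) - u 0 = (u t - u 0) + t • B (u t) := by abel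
    rw [e, smul_add, smul_smul, one_div_mul_cancel htne, one_smul]
  -- assemble the answer
  refine ⟨p + B (u 0), hv, ⟨p, proj_of_vi hpS hpVI, rfl⟩, ⟨p, hpS, rfl⟩, ?_, ?_⟩
  · rintro φ0 ⟨s, hs, rfl⟩
    have e1 : E' + B (u 0) - (p + B (u 0)) = E' - p := by abel
    have e2 : s + B (u 0) - (p + B (u 0)) = s - p := by abel
    show ⟪E' + B (u 0) - (p + B (u 0)), s + B (u 0) - (p + B (u 0))⟫ ≤ 0
    rw [e1, e2]
    exact hpVI s hs
  · rintro w0 ⟨s, hs, rfl⟩ hVIw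
    have h2 := hVIw (p + B (u 0)) ⟨p, hpS, rfl⟩
    have h2' : ⟪E' - s, p - s⟫ ≤ 0 := by
      rw [show E' + B (u 0) - (s + B (u 0)) = E' - s by abel,
        show (p + B (u 0)) - (s + B (u 0)) = p - s by abel] at h2
      exact h2
    have h1' : ⟪E' - p, s - p⟫ ≤ 0 := hpVI s hs
    have h3 : ⟪s - p, s - p⟫ ≤ 0 := by
      have e : ⟪E' - p, s - p⟫ + ⟪E' - s, p - s⟫ = ⟪s - p, s - p⟫ := by
        rw [show p - s = -(s - p) by abel, inner_neg_right, ← sub_eq_add_neg,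
          ← inner_sub_left]
        congr 1
        abel
      linarith
    have h4 : s = p := by
      have := self_eq_zero_of_nonpos h3
      rwa [sub_eq_zero] at this
    show s + B (u 0) = p + B (u 0)
    rw [h4]
end
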